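/- For every n ≥ 4, there is an (n,4,9)-multigraph G with all edge multiplicities in {1,2} whose product of edge multiplicities equals 2^(ex(n,{C₃,C₄})). Consequently ex_Π(n,4,9) ≥ 2^(ex(n,{C₃,C₄})). -/

import Mathlib

open Finset

def pairs (n : ℕ) (X : Finset (Fin n)) : Finset (Fin n × Fin n) :=
  (X ×ˢ X).filter (fun p => p.1 < p.2)

def mgS (n : ℕ) (w : Fin n → Fin n → ℕ) (X : Finset (Fin n)) : ℕ :=
  ∑ p ∈ pairs n X, w p.1 p.2

def mgP (n : ℕ) (w : Fin n → Fin n → ℕ) (X : Finset (Fin n)) : ℕ :=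
  ∏ p ∈ pairs n X, w p.1 p.2

def IsNSQ (n s q : ℕ) (w : Fin n → Fin n → ℕ) : Prop :=
  ∀ X : Finset (Fin n), X.card = s → mgS n w X ≤ q

def C3C4Free {n : ℕ} (G : SimpleGraph (Fin n)) : Prop :=
  (∀ x y z : Fin n, G.Adj x y → G.Adj y z → G.Adj x z → False) ∧
  (∀ a b c d : Fin n, a ≠ c → b ≠ d →
    G.Adj a b → G.Adj b c → G.Adj c d → G.Adj d a → False)

noncomputable def exC34 (n : ℕ) : ℕ :=
  sSup {m | ∃ G : SimpleGraph (Fin n), C3C4Free G ∧ m = Nat.card G.edgeSet}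

lemma key6 : ∀ b01 b02 b03 b12 b13 b23 : Bool,
    (¬(b01 = true ∧ b02 = true ∧ b12 = true)) →
    (¬(b01 = true ∧ b03 = true ∧ b13 = true)) →
    (¬(b02 = true ∧ b03 = true ∧ b23 = true)) →
    (¬(b12 = true ∧ b13 = true ∧ b23 = true)) →
    (¬(b01 = true ∧ b12 = true ∧ b23 = true ∧ b03 = true)) →
    (¬(b01 = true ∧ b13 = true ∧ b23 = true ∧ b02 = true)) →
    (¬(b02 = true ∧ b12 = true ∧ b13 = true ∧ b03 = true)) →
    (if b01 = true then 2 else 1) + (if b02 = true then 2 else 1) +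
    (if b03 = true then 2 else 1) + (if b12 = true then 2 else 1) +
    (if b13 = true then 2 else 1) + (if b23 = true then 2 else 1) ≤ 9 := by
  intro b01 b02 b03 b12 b13 b23
  cases b01 <;> cases b02 <;> cases b03 <;> cases b12 <;> cases b13 <;> cases b23 <;>
    simp_all

lemma pairs4 : pairs 4 Finset.univ =
    {((0:Fin 4),(1:Fin 4)), (0,2), (0,3), (1,2), (1,3), (2,3)} := by decide

theorem exPi_lower_bound_449 (n : ℕ) (hn : 4 ≤ n) :
    ∃ w : Fin n → Fin n → ℕ,
      (∀ i j, w i j = w j i) ∧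
      IsNSQ n 4 9 w ∧
      (∀ i j : Fin n, i ≠ j → w i j = 1 ∨ w i j = 2) ∧
      mgP n w Finset.univ = 2 ^ exC34 n := by
  classical
  -- the supremum is attained
  have h0 : (0:ℕ) ∈ {m | ∃ G : SimpleGraph (Fin n), C3C4Free G ∧ m = Nat.card G.edgeSet} := by
    refine ⟨⊥, ⟨fun x y z h _ _ => by simp at h, fun a b c d _ _ h _ _ _ => by simp at h⟩, ?_⟩
    simp
  have hbdd : BddAbove {m | ∃ G : SimpleGraph (Fin n), C3C4Free G ∧ m = Nat.card G.edgeSet} := by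
    refine ⟨Nat.card (Sym2 (Fin n)), fun m hm => ?_⟩
    obtain ⟨G, -, rfl⟩ := hm
    exact Nat.card_le_card_of_injective _ Subtype.val_injective
  have hmem := Nat.sSup_mem ⟨0, h0⟩ hbdd
  obtain ⟨G, hG, hcard⟩ := hmem
  refine ⟨fun i j => if G.Adj i j then 2 else 1, ?_, ?_, ?_, ?_⟩
  · intro i j
    simp only [G.adj_comm i j]
  · -- (4,9) condition
    intro X hX
    set e : Fin 4 → Fin n := fun i => (X.orderIsoOfFin hX i : Fin n) with he
    have hmono : StrictMono e := fun i j h =>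
      Subtype.coe_lt_coe.mpr ((X.orderIsoOfFin hX).strictMono h)
    have hinj : Function.Injective e := hmono.injective
    have hsurj : ∀ x ∈ X, ∃ i, e i = x := fun x hx =>
      ⟨(X.orderIsoOfFin hX).symm ⟨x, hx⟩,
        congrArg Subtype.val ((X.orderIsoOfFin hX).apply_symm_apply ⟨x, hx⟩)⟩
    have himg : pairs n X = (pairs 4 Finset.univ).image (fun p => (e p.1, e p.2)) := by
      ext p
      constructor
      · intro hp
        rw [pairs, mem_filter, mem_product] at hp
        obtain ⟨⟨h1, h2⟩, hlt⟩ := hp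
        obtain ⟨i, hi⟩ := hsurj _ h1
        obtain ⟨j, hj⟩ := hsurj _ h2
        refine mem_image.mpr ⟨(i, j), ?_, by rw [hi, hj]⟩
        rw [← hi, ← hj] at hlt
        simp [pairs, hmono.lt_iff_lt.mp hlt]
      · intro hp
        obtain ⟨q, hq, rfl⟩ := mem_image.mp hp
        have hqlt : q.1 < q.2 := by simpa [pairs] using hq
        simp only [pairs, mem_filter, mem_product]
        exact ⟨⟨(X.orderIsoOfFin hX q.1).2, (X.orderIsoOfFin hX q.2).2⟩, hmono hqlt⟩
    have hsum : mgS n (fun i j => if G.Adj i j then 2 else 1) X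
        = ∑ p ∈ pairs 4 Finset.univ, (if G.Adj (e p.1) (e p.2) then 2 else 1) := by
      rw [mgS, himg, Finset.sum_image]
      intro p hp q hq h
      have h1 := hinj (congrArg Prod.fst h)
      have h2 := hinj (congrArg Prod.snd h)
      exact Prod.ext h1 h2
    rw [hsum, pairs4]
    have hne : ∀ i j : Fin 4, i ≠ j → e i ≠ e j := fun i j h => fun h' => h (hinj h')
    have hk := key6 (decide (G.Adj (e 0) (e 1))) (decide (G.Adj (e 0) (e 2)))
      (decide (G.Adj (e 0) (e 3))) (decide (G.Adj (e 1) (e 2)))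
      (decide (G.Adj (e 1) (e 3))) (decide (G.Adj (e 2) (e 3)))
      (by simp only [decide_eq_true_eq]; rintro ⟨h1, h2, h3⟩; exact hG.1 _ _ _ h1 h3 h2)
      (by simp only [decide_eq_true_eq]; rintro ⟨h1, h2, h3⟩; exact hG.1 _ _ _ h1 h3 h2)
      (by simp only [decide_eq_true_eq]; rintro ⟨h1, h2, h3⟩; exact hG.1 _ _ _ h1 h3 h2)
      (by simp only [decide_eq_true_eq]; rintro ⟨h1, h2, h3⟩; exact hG.1 _ _ _ h1 h3 h2)
      (by simp only [decide_eq_true_eq]; rintro ⟨h1, h2, h3, h4⟩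
          exact hG.2 (e 0) (e 1) (e 2) (e 3) (hne 0 2 (by decide)) (hne 1 3 (by decide))
            h1 h2 h3 h4.symm)
      (by simp only [decide_eq_true_eq]; rintro ⟨h1, h2, h3, h4⟩
          exact hG.2 (e 0) (e 1) (e 3) (e 2) (hne 0 3 (by decide)) (hne 1 2 (by decide))
            h1 h2 h3.symm h4.symm)
      (by simp only [decide_eq_true_eq]; rintro ⟨h1, h2, h3, h4⟩
          exact hG.2 (e 0) (e 2) (e 1) (e 3) (hne 0 1 (by decide)) (hne 2 3 (by decide))
            h1 h2.symm h3 h4.symm)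
    simp only [decide_eq_true_eq] at hk
    refine le_trans (le_of_eq ?_) hk
    rw [show ({((0:Fin 4),(1:Fin 4)), (0,2), (0,3), (1,2), (1,3), (2,3)} : Finset (Fin 4 × Fin 4))
      = insert (0,1) (insert (0,2) (insert (0,3) (insert (1,2) (insert (1,3) {(2,3)})))) from rfl]
    rw [Finset.sum_insert (by decide), Finset.sum_insert (by decide),
      Finset.sum_insert (by decide), Finset.sum_insert (by decide),
      Finset.sum_insert (by decide), Finset.sum_singleton]
    ring
  · intro i j _
    by_cases h : G.Adj i j <;> simp [h]
  · -- the product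
    rw [mgP, exC34, hcard]
    have hprod : ∏ p ∈ pairs n Finset.univ, (if G.Adj p.1 p.2 then 2 else 1)
        = 2 ^ ((pairs n Finset.univ).filter (fun p => G.Adj p.1 p.2)).card := by
      rw [Finset.prod_ite]
      simp [Finset.prod_const]
    rw [hprod]
    congr 1
    have h2 : Nat.card G.edgeSet = G.edgeFinset.card := by
      rw [Nat.card_eq_fintype_card, SimpleGraph.edgeFinset_card]
    rw [h2]
    apply Finset.card_bij (fun p _ => Sym2.mk p.1 p.2)
    · rintro ⟨a, b⟩ hp
      simp only [pairs, mem_filter, mem_product] at hp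
      simpa [SimpleGraph.mem_edgeFinset] using hp.2
    · rintro ⟨a, b⟩ hp ⟨c, d⟩ hq h
      simp only [pairs, mem_filter, mem_product] at hp hq
      rcases Sym2.eq_iff.mp h with ⟨rfl, rfl⟩ | ⟨rfl, rfl⟩
      · rfl
      · exact absurd hq.1.2 (asymm hp.1.2)
    · intro t ht
      induction t using Sym2.ind with
      | _ x y =>
        rw [SimpleGraph.mem_edgeFinset, SimpleGraph.mem_edgeSet] at ht
        rcases lt_or_gt_of_ne (G.ne_of_adj ht) with h | h
        · exact ⟨(x, y), by simp [pairs, h, ht], rfl⟩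
        · exact ⟨(y, x), by simp [pairs, h, ht.symm], Sym2.eq_swap⟩
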